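/- Let Σ = {0,1} and let X_G be the golden mean shift, i.e. the set of bi-infinite sequences over {0,1} with no two consecutive 1s. A string A_1...A_n of nonempty subsets of Σ is 'independently legal' for X_G if every word a_1...a_n with a_i ∈ A_i appears in some point of X_G. Then for every n, the maximum over independently legal strings A_1...A_n of ∏_{i=1}^n |A_i| equals 2^⌈n/2⌉. -/

import Mathlib

/-- A finite word over `{0,1}` (encoded as `Bool`, with `true` = 1) is in the language of
the golden mean shift iff it contains no two consecutive 1s. -/
def gmLegal {n : ℕ} (w : Fin n → Bool) : Prop :=
  ∀ i j : Fin n, (i : ℕ) + 1 = (j : ℕ) → ¬(w i = true ∧ w j = true)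

/-- A string `A_1 … A_n` of nonempty subsets of `{0,1}` is independently legal for the
golden mean shift if every selection `a_i ∈ A_i` yields a word in the language. -/
def gmIndepLegal {n : ℕ} (A : Fin n → Finset Bool) : Prop :=
  (∀ i, (A i).Nonempty) ∧ ∀ w : Fin n → Bool, (∀ i, w i ∈ A i) → gmLegal w

lemma prod_alt (n : ℕ) :
    (∏ i : Fin n, (if (i : ℕ) % 2 = 0 then 2 else 1)) = 2 ^ ((n + 1) / 2) := by
  induction n with
  | zero => simp
  | succ n ih =>
    rw [Fin.prod_univ_castSucc]
    simp only [Fin.coe_castSucc, Fin.val_last]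
    rw [ih]
    rcases Nat.even_or_odd n with h | h
    · obtain ⟨k, hk⟩ := h
      subst hk
      rw [if_pos (by omega)]
      have : (k + k + 1 + 1) / 2 = (k + k + 1) / 2 + 1 := by omega
      rw [this, pow_succ]
    · obtain ⟨k, hk⟩ := h
      subst hk
      rw [if_neg (by omega)]
      have : (2 * k + 1 + 1 + 1) / 2 = (2 * k + 1 + 1) / 2 := by omega
      rw [this, mul_one]

/-- For every `n`, the maximum over independently legal strings `A_1 … A_n` of
`∏ |A_i|` equals `2^⌈n/2⌉`. -/
theorem stmt0 (n : ℕ) :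
    IsGreatest {k : ℕ | ∃ A : Fin n → Finset Bool, gmIndepLegal A ∧ ∏ i, (A i).card = k}
      (2 ^ ((n + 1) / 2)) := by
  constructor
  · -- membership: take A i = {false,true} for even i, {false} for odd i
    refine ⟨fun i => if (i : ℕ) % 2 = 0 then {false, true} else {false}, ⟨?_, ?_⟩, ?_⟩
    · intro i
      dsimp only
      split <;> simp
    · intro w hw i j hij ⟨hwi, hwj⟩
      have hi := hw i
      have hj := hw j
      dsimp only at hi hj
      rcases Nat.even_or_odd (i : ℕ) with h | h
      · obtain ⟨k, hk⟩ := h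
        have : ¬ ((j : ℕ) % 2 = 0) := by omega
        rw [if_neg this] at hj
        simp [hwj] at hj
      · have : ¬ ((i : ℕ) % 2 = 0) := by
          obtain ⟨k, hk⟩ := h; omega
        rw [if_neg this] at hi
        simp [hwi] at hi
    · rw [← prod_alt n]
      apply Finset.prod_congr rfl
      intro i _
      dsimp only
      split <;> decide
  · -- upper bound
    rintro k ⟨A, ⟨hne, hleg⟩, rfl⟩
    set S : Finset (Fin n) := Finset.univ.filter (fun i => (A i).card = 2) with hS
    have hcard_le : ∀ i, (A i).card ≤ 2 := by
      intro i
      simpa using Finset.card_le_univ (A i)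
    have htrue : ∀ i ∈ S, true ∈ A i := by
      intro i hi
      rw [hS, Finset.mem_filter] at hi
      have : A i = Finset.univ := Finset.eq_univ_of_card _ (by simp [hi.2])
      simp [this]
    have hnoadj : ∀ i ∈ S, ∀ j ∈ S, (i : ℕ) + 1 ≠ (j : ℕ) := by
      intro i hi j hj hij
      classical
      set w : Fin n → Bool := fun k => if k = i ∨ k = j then true else (hne k).choose with hw
      have hwmem : ∀ k, w k ∈ A k := by
        intro k
        by_cases h : k = i ∨ k = j
        · have hk : w k = true := by simp [hw, h]
          rw [hk]
          rcases h with h | h <;> subst h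
          · exact htrue _ hi
          · exact htrue _ hj
        · have hk : w k = (hne k).choose := by simp [hw, h]
          rw [hk]; exact (hne k).choose_spec
      exact hleg w hwmem i j hij ⟨by simp [hw], by simp [hw]⟩
    have hprod : ∏ i, (A i).card = 2 ^ S.card := by
      have : ∀ i ∈ Finset.univ, (A i).card = if i ∈ S then 2 else 1 := by
        intro i _
        have h1 : 1 ≤ (A i).card := Finset.card_pos.2 (hne i)
        by_cases h : (A i).card = 2
        · rw [if_pos (by simp [hS, h]), h]
        · rw [if_neg (by simp [hS, h])]
          have h2 := hcard_le i
          omega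
      rw [Finset.prod_congr rfl this, Finset.prod_ite_mem, Finset.univ_inter,
        Finset.prod_const]
    rw [hprod]
    apply Nat.pow_le_pow_right (by norm_num)
    -- S has no two adjacent elements; map i ↦ i/2 injectively into range ((n+1)/2)
    have : S.card ≤ (Finset.range ((n + 1) / 2)).card := by
      refine Finset.card_le_card_of_injOn (fun i => (i : ℕ) / 2) ?_ ?_
      · intro i hi
        simp only [Finset.mem_coe, Finset.mem_range]
        have := i.isLt
        omega
      · intro i hi j hj hij
        have hij2 : (i : ℕ) / 2 = (j : ℕ) / 2 := hij
        by_contra hne'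
        have hv : (i : ℕ) ≠ (j : ℕ) := fun h => hne' (Fin.ext h)
        have : (i : ℕ) + 1 = (j : ℕ) ∨ (j : ℕ) + 1 = (i : ℕ) := by omega
        rcases this with h | h
        · exact hnoadj i hi j hj h
        · exact hnoadj j hj i hi h
    simpa using this
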